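/- The elements γ_0 = y_0 − x_0 u_0, …, γ_n = y_n − x_n u_n form a regular sequence in R; equivalently, the Koszul complex F on γ_0,…,γ_n over R satisfies H_t(F) = 0 for all t > 0. -/

import Mathlib

/-!
# Statement 7 (part of Theorem `resdiag`)

Let `S = k[x₀,…,xₙ]` be positively `A`-graded with `deg xᵢ = dᵢ`, let `Q ⊆ A`
be the submonoid generated by the `dᵢ` (the effective semigroup), let
`S' = k[x₀,…,xₙ,y₀,…,yₙ]` and let `R = S'[Q]` be the semigroup algebra, with
`uᵢ = u^{dᵢ}`.  Then the elements `γᵢ = yᵢ - xᵢuᵢ` form a regular sequence in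
`R` (equivalently, the Koszul complex on `γ₀,…,γₙ` over `R` is acyclic in
positive degrees).
-/

noncomputable section

variable (k : Type) [Field k] (A : Type) [AddCommGroup A] [DecidableEq A]
  (n : ℕ) (d : Fin (n + 1) → A)

/-- `S = k[x₀,…,xₙ]` with `deg xᵢ = dᵢ` is positively `A`-graded. -/
def PositivelyGradedPoly : Prop :=
  ∃ θ : A →+ ℤ, ∀ q ∈ AddSubmonoid.closure (Set.range d), 0 ≤ θ q ∧ (θ q = 0 → q = 0)

/-- The effective semigroup `Q ⊆ A`, generated by `d₀,…,dₙ`. -/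
def effQ : AddSubmonoid A := AddSubmonoid.closure (Set.range d)

/-- `S' = k[x₀,…,xₙ,y₀,…,yₙ]`: the Cox ring of the product.  The first copy
of `Fin (n+1)` indexes the `x`-variables, the second the `y`-variables. -/
abbrev Sprime := MvPolynomial (Fin (n + 1) ⊕ Fin (n + 1)) k

/-- `R = S'[Q]`, the semigroup algebra of `Q` over `S'`; the basis element
`u^q` (`q ∈ Q`) is homogeneous of degree `(-q, q)`. -/
abbrev Rring := AddMonoidAlgebra (Sprime k n) ↥(effQ A n d)

/-- `uᵢ = u^{dᵢ} ∈ R`. -/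
def uElt (i : Fin (n + 1)) : Rring k A n d :=
  AddMonoidAlgebra.single
    ⟨d i, AddSubmonoid.subset_closure (Set.mem_range_self i)⟩ 1

/-- `γᵢ = yᵢ - xᵢuᵢ ∈ R`, homogeneous of degree `(0, dᵢ)`. -/
def gamma (i : Fin (n + 1)) : Rring k A n d :=
  AddMonoidAlgebra.single 0 (MvPolynomial.X (Sum.inr i)) -
    AddMonoidAlgebra.single
      ⟨d i, AddSubmonoid.subset_closure (Set.mem_range_self i)⟩
      (MvPolynomial.X (Sum.inl i))

set_option synthInstance.maxHeartbeats 1000000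
set_option maxHeartbeats 1000000

section Aux
open RingTheory.Sequence
open scoped Pointwise
-- auxiliary defs
abbrev dQ (i : Fin (n + 1)) : ↥(effQ A n d) :=
  ⟨d i, AddSubmonoid.subset_closure (Set.mem_range_self i)⟩

/-- `B = k[x][Q]`. -/
abbrev Bring := AddMonoidAlgebra (MvPolynomial (Fin (n + 1)) k) ↥(effQ A n d)

/-- the coefficient map `B →+* R`. -/
def fB : Bring k A n d →+* Rring k A n d :=
  AddMonoidAlgebra.liftNCRingHom
    (AddMonoidAlgebra.singleZeroRingHom.comp
      (MvPolynomial.rename (R := k) Sum.inl).toRingHom)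
    (AddMonoidAlgebra.of (Sprime k n) ↥(effQ A n d))
    (fun _ _ => Commute.all _ _)

lemma fB_single (a : ↥(effQ A n d)) (b : MvPolynomial (Fin (n + 1)) k) :
    fB k A n d (AddMonoidAlgebra.single a b)
      = AddMonoidAlgebra.single a (MvPolynomial.rename Sum.inl b) := by
  show AddMonoidAlgebra.liftNC _ _ _ = _
  rw [AddMonoidAlgebra.liftNC_single]
  show AddMonoidAlgebra.single 0 _ * AddMonoidAlgebra.single a 1 = _
  rw [AddMonoidAlgebra.single_mul_single, zero_add, mul_one]
  rfl

/-- `Φ : B[y₀,…,yₙ] →+* R`. -/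
def Phi : MvPolynomial (Fin (n + 1)) (Bring k A n d) →+* Rring k A n d :=
  MvPolynomial.eval₂Hom (fB k A n d) (fun i => gamma k A n d i)

/-- `ψ₀ : S' →+* B[y]`. -/
def psi0 : Sprime k n →+* MvPolynomial (Fin (n + 1)) (Bring k A n d) :=
  MvPolynomial.eval₂Hom
    ((MvPolynomial.C : Bring k A n d →+* _).comp
      (AddMonoidAlgebra.singleZeroRingHom.comp (MvPolynomial.C : k →+* _)))
    (Sum.elim
      (fun i => MvPolynomial.C (AddMonoidAlgebra.single 0 (MvPolynomial.X i)))
      (fun i => MvPolynomial.X i +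
        MvPolynomial.C (AddMonoidAlgebra.single (dQ A n d i) (MvPolynomial.X i))))

/-- `Ψ : R →+* B[y]`. -/
def Psi : Rring k A n d →+* MvPolynomial (Fin (n + 1)) (Bring k A n d) :=
  AddMonoidAlgebra.liftNCRingHom (psi0 k A n d)
    ((MvPolynomial.C : Bring k A n d →+* _).toMonoidHom.comp
      (AddMonoidAlgebra.of (MvPolynomial (Fin (n + 1)) k) ↥(effQ A n d)))
    (fun _ _ => Commute.all _ _)

lemma Psi_single (a : ↥(effQ A n d)) (b : Sprime k n) :
    Psi k A n d (AddMonoidAlgebra.single a b)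
      = psi0 k A n d b * MvPolynomial.C (AddMonoidAlgebra.single a 1) := by
  show AddMonoidAlgebra.liftNC _ _ _ = _
  rw [AddMonoidAlgebra.liftNC_single]
  rfl

lemma Psi_comp_Phi : (Psi k A n d).comp (Phi k A n d) = RingHom.id _ := by
  apply MvPolynomial.ringHom_ext
  · intro b
    show (((Psi k A n d).comp (Phi k A n d)).comp
      (MvPolynomial.C : Bring k A n d →+* _)) b
      = ((RingHom.id _).comp (MvPolynomial.C : Bring k A n d →+* _)) b
    congr 1
    apply AddMonoidAlgebra.ringHom_ext
    · intro b'
      show Psi k A n d (Phi k A n d (MvPolynomial.C (AddMonoidAlgebra.single 0 b')))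
        = MvPolynomial.C (AddMonoidAlgebra.single 0 b')
      rw [show Phi k A n d (MvPolynomial.C (AddMonoidAlgebra.single 0 b'))
            = fB k A n d (AddMonoidAlgebra.single 0 b') from MvPolynomial.eval₂Hom_C _ _ _,
        fB_single, Psi_single, ← AddMonoidAlgebra.one_def, map_one, mul_one]
      -- remains : psi0 (rename inl b') = C (single 0 b')
      have : (psi0 k A n d).comp (MvPolynomial.rename (R := k) Sum.inl).toRingHom
          = (MvPolynomial.C : Bring k A n d →+* _).comp AddMonoidAlgebra.singleZeroRingHom := by
        apply MvPolynomial.ringHom_ext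
        · intro c
          show psi0 k A n d (MvPolynomial.rename Sum.inl (MvPolynomial.C c)) = _
          rw [MvPolynomial.rename_C]
          exact MvPolynomial.eval₂Hom_C _ _ _
        · intro j
          show psi0 k A n d (MvPolynomial.rename Sum.inl (MvPolynomial.X j)) = _
          rw [MvPolynomial.rename_X]
          exact MvPolynomial.eval₂Hom_X' _ _ _
      exact congrFun (congrArg (fun h => h.toFun) this) b'
    · intro a
      show Psi k A n d (Phi k A n d (MvPolynomial.C (AddMonoidAlgebra.single a 1)))
        = MvPolynomial.C (AddMonoidAlgebra.single a 1)
      rw [show Phi k A n d (MvPolynomial.C (AddMonoidAlgebra.single a 1))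
            = fB k A n d (AddMonoidAlgebra.single a 1) from MvPolynomial.eval₂Hom_C _ _ _,
        fB_single]
      rw [show (MvPolynomial.rename (R := k) (σ := Fin (n+1)) Sum.inl) 1 = 1 from map_one _]
      rw [Psi_single, map_one, one_mul]
  · intro i
    show Psi k A n d (Phi k A n d (MvPolynomial.X i)) = MvPolynomial.X i
    have hX : Phi k A n d (MvPolynomial.X i) = gamma k A n d i :=
      MvPolynomial.eval₂Hom_X' _ _ _
    rw [hX]
    rw [gamma, map_sub, Psi_single, Psi_single]
    have h1 : psi0 k A n d (MvPolynomial.X (Sum.inr i))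
        = MvPolynomial.X i +
          MvPolynomial.C (AddMonoidAlgebra.single (dQ A n d i) (MvPolynomial.X i)) :=
      MvPolynomial.eval₂Hom_X' _ _ _
    have h2 : psi0 k A n d (MvPolynomial.X (Sum.inl i))
        = MvPolynomial.C (AddMonoidAlgebra.single 0 (MvPolynomial.X i)) :=
      MvPolynomial.eval₂Hom_X' _ _ _
    rw [h1]
    rw [h2]
    rw [← map_mul (MvPolynomial.C : Bring k A n d →+* _)]
    rw [AddMonoidAlgebra.single_mul_single]
    rw [zero_add, mul_one]
    rw [← AddMonoidAlgebra.one_def]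
    rw [map_one (MvPolynomial.C : Bring k A n d →+* _), mul_one]
    exact add_sub_cancel_right (MvPolynomial.X i)
      (MvPolynomial.C (AddMonoidAlgebra.single (dQ A n d i)
        (MvPolynomial.X i : MvPolynomial (Fin (n + 1)) k)))

lemma Phi_comp_Psi : (Phi k A n d).comp (Psi k A n d) = RingHom.id _ := by
  apply AddMonoidAlgebra.ringHom_ext
  · intro s
    show Phi k A n d (Psi k A n d (AddMonoidAlgebra.single 0 s)) = AddMonoidAlgebra.single 0 s
    rw [Psi_single, ← AddMonoidAlgebra.one_def,
      map_one (MvPolynomial.C : Bring k A n d →+* _), mul_one]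
    have : (Phi k A n d).comp (psi0 k A n d)
        = (AddMonoidAlgebra.singleZeroRingHom : Sprime k n →+* Rring k A n d) := by
      apply MvPolynomial.ringHom_ext
      · intro c
        show Phi k A n d (psi0 k A n d (MvPolynomial.C c)) = _
        rw [show psi0 k A n d (MvPolynomial.C c)
              = MvPolynomial.C (AddMonoidAlgebra.single 0 (MvPolynomial.C c))
            from MvPolynomial.eval₂Hom_C _ _ _]
        rw [show Phi k A n d (MvPolynomial.C (AddMonoidAlgebra.single 0 (MvPolynomial.C c)))
              = fB k A n d _ from MvPolynomial.eval₂Hom_C _ _ _, fB_single,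
          MvPolynomial.rename_C]
        rfl
      · intro j
        cases j with
        | inl i =>
          show Phi k A n d (psi0 k A n d (MvPolynomial.X (Sum.inl i))) = _
          rw [show psi0 k A n d (MvPolynomial.X (Sum.inl i))
                = MvPolynomial.C (AddMonoidAlgebra.single 0 (MvPolynomial.X i))
              from MvPolynomial.eval₂Hom_X' _ _ _]
          rw [show Phi k A n d (MvPolynomial.C (AddMonoidAlgebra.single 0
                (MvPolynomial.X i : MvPolynomial (Fin (n + 1)) k)))
              = fB k A n d _ from MvPolynomial.eval₂Hom_C _ _ _, fB_single,
            MvPolynomial.rename_X]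
          rfl
        | inr i =>
          show Phi k A n d (psi0 k A n d (MvPolynomial.X (Sum.inr i))) = _
          rw [show psi0 k A n d (MvPolynomial.X (Sum.inr i))
                = MvPolynomial.X i +
                  MvPolynomial.C (AddMonoidAlgebra.single (dQ A n d i) (MvPolynomial.X i))
              from MvPolynomial.eval₂Hom_X' _ _ _]
          rw [map_add (Phi k A n d)]
          rw [show Phi k A n d (MvPolynomial.X i) = gamma k A n d i
            from MvPolynomial.eval₂Hom_X' _ _ _]
          rw [show Phi k A n d (MvPolynomial.C (AddMonoidAlgebra.single (dQ A n d i)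
                (MvPolynomial.X i : MvPolynomial (Fin (n + 1)) k)))
              = fB k A n d _ from MvPolynomial.eval₂Hom_C _ _ _, fB_single,
            MvPolynomial.rename_X]
          show gamma k A n d i +
              AddMonoidAlgebra.single (dQ A n d i) (MvPolynomial.X (Sum.inl i))
            = AddMonoidAlgebra.single 0 (MvPolynomial.X (Sum.inr i))
          rw [gamma]
          exact sub_add_cancel _ _
    exact congrFun (congrArg (fun h => h.toFun) this) s
  · intro a
    show Phi k A n d (Psi k A n d (AddMonoidAlgebra.single a 1)) = AddMonoidAlgebra.single a 1
    rw [Psi_single, map_one (psi0 k A n d), one_mul,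
      show Phi k A n d (MvPolynomial.C (AddMonoidAlgebra.single a 1))
        = fB k A n d _ from MvPolynomial.eval₂Hom_C _ _ _, fB_single]
    rw [show (MvPolynomial.rename (R := k) (σ := Fin (n + 1)) Sum.inl) 1 = 1 from map_one _]

def PhiEquiv : MvPolynomial (Fin (n + 1)) (Bring k A n d) ≃+* Rring k A n d :=
  RingEquiv.ofRingHom (Phi k A n d) (Psi k A n d) (Phi_comp_Psi k A n d) (Psi_comp_Phi k A n d)

open RingTheory.Sequence
open scoped Pointwise

lemma ringEquiv_isRegular_congr {R S : Type*} [CommRing R] [CommRing S]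
    (e : R ≃+* S) (rs : List R) :
    IsRegular R rs ↔ IsRegular S (rs.map e) :=
  AddEquiv.isRegular_congr (e := e.toAddEquiv) <| by
    rw [List.forall₂_map_right_iff]
    exact List.forall₂_same.mpr fun r _ x => by
      simp [smul_eq_mul]

lemma smul_top_eq_span {R : Type*} [CommRing R] (r : R) :
    (r • ⊤ : Submodule R R) = Ideal.span {r} := by
  rw [← Submodule.ideal_span_singleton_smul, smul_eq_mul, Ideal.mul_top]

lemma polyStep {D : Type*} [CommRing D] (l : List D) (hl : IsRegular D l) :
    IsRegular (Polynomial D) (Polynomial.X :: l.map Polynomial.C) := by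
  rw [RingTheory.Sequence.isRegular_cons_iff]
  constructor
  · show Function.Injective _
    have h := (Polynomial.monic_X (R := D)).isRegular.left
    intro a b hab
    exact h (by simpa [smul_eq_mul] using hab)
  · have heq : ((Polynomial.X : Polynomial D) • ⊤ : Submodule (Polynomial D) (Polynomial D))
        = Ideal.span {Polynomial.X - Polynomial.C (0 : D)} := by
      rw [smul_top_eq_span, Polynomial.C_0, sub_zero]
    let E : QuotSMulTop (Polynomial.X : Polynomial D) (Polynomial D) ≃+* D :=
      (Ideal.quotEquivOfEq heq).trans (Polynomial.quotientSpanXSubCAlgEquiv (0 : D)).toRingEquiv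
    have hE : ∀ p : Polynomial D, E (Submodule.Quotient.mk p) = p.eval 0 := by
      intro p
      show (Polynomial.quotientSpanXSubCAlgEquiv (0 : D))
        (Ideal.quotEquivOfEq heq (Ideal.Quotient.mk _ p)) = p.eval 0
      rw [Ideal.quotEquivOfEq_mk, Polynomial.quotientSpanXSubCAlgEquiv_mk]
    refine (AddEquiv.isRegular_congr (e := E.toAddEquiv) ?_).mpr hl
    rw [List.forall₂_map_left_iff]
    refine List.forall₂_same.mpr fun c _ x => ?_
    obtain ⟨p, rfl⟩ := Submodule.Quotient.mk_surjective _ x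
    show E (Submodule.Quotient.mk (Polynomial.C c • p)) = c • E (Submodule.Quotient.mk p)
    rw [hE, hE, smul_eq_mul, smul_eq_mul, Polynomial.eval_mul, Polynomial.eval_C]

lemma regX (C : Type*) [CommRing C] [Nontrivial C] (m : ℕ) :
    IsRegular (MvPolynomial (Fin m) C) (List.ofFn fun i : Fin m => (MvPolynomial.X i : MvPolynomial (Fin m) C)) := by
  induction m with
  | zero => simpa using RingTheory.Sequence.IsRegular.nil (M := MvPolynomial (Fin 0) C) (R := MvPolynomial (Fin 0) C)
  | succ m ih =>
    rw [ringEquiv_isRegular_congr (MvPolynomial.finSuccEquiv C m).toRingEquiv]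
    have : (List.ofFn fun i : Fin (m+1) => (MvPolynomial.X i : MvPolynomial (Fin (m+1)) C)).map
        (MvPolynomial.finSuccEquiv C m).toRingEquiv
        = Polynomial.X :: (List.ofFn fun i : Fin m => (MvPolynomial.X i : MvPolynomial (Fin m) C)).map Polynomial.C := by
      rw [List.map_ofFn, List.ofFn_succ, List.map_ofFn]
      congr 1
      · exact MvPolynomial.finSuccEquiv_X_zero
      · congr 1
        exact funext fun i => MvPolynomial.finSuccEquiv_X_succ
    rw [this]
    exact polyStep _ ih


end Aux

set_option synthInstance.maxHeartbeats 1000000 in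
/-- **Statement 7.** -/
theorem statement7 (hpos : PositivelyGradedPoly A n d) :
    RingTheory.Sequence.IsRegular (Rring k A n d)
      (List.ofFn fun i => gamma k A n d i) := by
  have h := regX (Bring k A n d) (n + 1)
  rw [ringEquiv_isRegular_congr (PhiEquiv k A n d)] at h
  rw [List.map_ofFn] at h
  have hfun : (fun i : Fin (n + 1) => (PhiEquiv k A n d)
      (MvPolynomial.X i : MvPolynomial (Fin (n + 1)) (Bring k A n d)))
      = fun i => gamma k A n d i :=
    funext fun i => MvPolynomial.eval₂Hom_X' _ _ _
  rw [show ((PhiEquiv k A n d : _) ∘ fun i : Fin (n + 1) =>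
      (MvPolynomial.X i : MvPolynomial (Fin (n + 1)) (Bring k A n d))) =
      fun i => gamma k A n d i from hfun] at h
  exact h
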